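/- arXiv:1705.00084 — 5 statements merged into one kernel-verified Lean document; each statement's English description precedes it below -/
import Mathlib

section
/- Let n be even, d ≥ 3, ζ a primitive 2d-th root of unity in C. Define p : Z^{n+2} → C by p_i := ζ^{i_0 + i_2 + ⋯ + i_n} if i ∈ Ǐ (where Ǐ := { i : 0 ≤ i_e ≤ d-2 for all e and i_{2l-2} + i_{2l-1} = d-2 for all l = 1,...,n/2+1 }), and p_i := 0 otherwise. With A, B, φ as above, for all i ∈ A and j ∈ B one has p_{i+j} = 1 if i = φ(j), and p_{i+j} = 0 otherwise. -/
/-- The set `Ǐ` of integer vectors in `ℤ^{2m+2}` with entries in `[0, d-2]` whose consecutive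
pair-sums `i_{2l} + i_{2l+1}` all equal `d-2`. -/
def Icheck (m d : ℕ) : Set (Fin (2*m+2) → ℤ) :=
  {i | (∀ e, 0 ≤ i e ∧ i e ≤ (d : ℤ) - 2) ∧
    ∀ l : ℕ, (hl : l < m+1) → i ⟨2*l, by omega⟩ + i ⟨2*l+1, by omega⟩ = (d : ℤ) - 2}

/-- The sum `i_0 + i_2 + ⋯ + i_n` of the even-index entries of `i`. -/
def evenSum (m : ℕ) (i : Fin (2*m+2) → ℤ) : ℤ :=
  ∑ e ∈ Finset.univ.filter (fun e : Fin (2*m+2) => Even (e : ℕ)), i e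

/-- The set `I_N` of integer vectors with entries in `[0, d-2]` summing to `N`. -/
def Iset (m d : ℕ) (N : ℤ) : Set (Fin (2*m+2) → ℤ) :=
  {i | (∀ e, 0 ≤ i e ∧ i e ≤ (d : ℤ) - 2) ∧ ∑ e, i e = N}

/-- The map `φ` with `φ(j)_{2l} = 0` and `φ(j)_{2l+1} = d - 2 - j_{2l+1}`. -/
def phiMap (m d : ℕ) (j : Fin (2*m+2) → ℤ) : Fin (2*m+2) → ℤ :=
  fun e => if Even (e : ℕ) then 0 else (d : ℤ) - 2 - j e

/-- For `ζ` a primitive `2d`-th root of unity and `p` the period function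
(`p_i = ζ^{i_0+i_2+⋯+i_n}` on `Ǐ`, zero elsewhere): for all `i ∈ A` and `j ∈ B`,
`p_{i+j} = 1` if `i = φ(j)` and `p_{i+j} = 0` otherwise. -/
theorem stmt_4 (m d : ℕ) (hd : 3 ≤ d) (ζ : ℂ) (hζ : IsPrimitiveRoot ζ (2*d))
    (p : (Fin (2*m+2) → ℤ) → ℂ)
    (hp1 : ∀ i ∈ Icheck m d, p i = ζ ^ (evenSum m i))
    (hp2 : ∀ i ∉ Icheck m d, p i = 0) :
    ∀ i ∈ {i | i ∈ Iset m d ((m : ℤ) * d - 2*m - 2) ∧ ∀ e : Fin (2*m+2), Even (e : ℕ) → i e = 0},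
    ∀ j ∈ {j | j ∈ Iset m d (d : ℤ) ∧ ∀ e : Fin (2*m+2), Even (e : ℕ) → j e = 0},
      p (i + j) = if i = phiMap m d j then 1 else 0 := by
  rintro i ⟨⟨hib, his⟩, hiz⟩ j ⟨⟨hjb, hjs⟩, hjz⟩
  by_cases h : i = phiMap m d j
  · rw [if_pos h]
    have hmem : (i + j) ∈ Icheck m d := by
      constructor
      · intro e
        rcases Nat.even_or_odd (e : ℕ) with he | he
        · simp only [Pi.add_apply, hiz e he, hjz e he]
          constructor <;> omega
        · have hi : i e = (d : ℤ) - 2 - j e := by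
            rw [h]; simp [phiMap, Nat.not_even_iff_odd.mpr he]
          have := hjb e
          simp only [Pi.add_apply, hi]
          constructor <;> omega
      · intro l hl
        have he1 : Even (((⟨2*l, by omega⟩ : Fin (2*m+2)) : ℕ)) := ⟨l, two_mul l⟩
        have ho : ¬ Even (((⟨2*l+1, by omega⟩ : Fin (2*m+2)) : ℕ)) := by
          simp [Nat.even_add_one, Nat.even_mul]
        have hi : i ⟨2*l+1, by omega⟩ = (d : ℤ) - 2 - j ⟨2*l+1, by omega⟩ := by
          rw [h]; simp [phiMap, ho]
        simp only [Pi.add_apply, hiz _ he1, hjz _ he1, hi]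
        ring
    rw [hp1 _ hmem]
    have hz : evenSum m (i + j) = 0 := by
      apply Finset.sum_eq_zero
      intro e he
      simp only [Finset.mem_filter] at he
      simp [Pi.add_apply, hiz e he.2, hjz e he.2]
    rw [hz, zpow_zero]
  · rw [if_neg h]
    apply hp2
    intro hmem
    apply h
    obtain ⟨hb, hpair⟩ := hmem
    funext e
    rcases Nat.even_or_odd (e : ℕ) with he | he
    · simp [phiMap, he, hiz e he]
    · obtain ⟨l, hl⟩ := he
      have hlm : l < m + 1 := by omega
      have heq : (⟨2*l+1, by omega⟩ : Fin (2*m+2)) = e := by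
        apply Fin.ext; simp; omega
      have he1 : Even (((⟨2*l, by omega⟩ : Fin (2*m+2)) : ℕ)) := ⟨l, two_mul l⟩
      have := hpair l hlm
      rw [heq] at this
      simp only [Pi.add_apply, hiz _ he1, hjz _ he1] at this
      have hodd : ¬ Even (e : ℕ) := by
        rw [Nat.even_iff]; omega
      simp only [phiMap, if_neg hodd]
      omega
end

section
/- With the notation above, let i ∈ I_{(n/2)d-n-2} satisfy i_{2l-2} + i_{2l-1} ≤ d-2 for all l = 1, ..., n/2+1, and let j ∈ B be the unique element with j_{2l-2} = 0 and j_{2l-1} = d - 2 - i_{2l-2} - i_{2l-1}. Then for every h ∈ I_d, p_{i+h} = ζ^{i_0 + i_2 + ⋯ + i_n} · p_{φ(j)+h}. -/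
/-- If `i ∈ I_{(n/2)d-n-2}` has all pair-sums `≤ d-2` and `j ∈ B` is the element with
`j_{2l} = 0`, `j_{2l+1} = d-2-i_{2l}-i_{2l+1}`, then `p_{i+h} = ζ^{i_0+i_2+⋯+i_n} · p_{φ(j)+h}`
for every `h ∈ I_d`. -/
theorem stmt_6 (m d : ℕ) (hd : 3 ≤ d) (ζ : ℂ) (hζ : IsPrimitiveRoot ζ (2*d))
    (p : (Fin (2*m+2) → ℤ) → ℂ)
    (hp1 : ∀ i ∈ Icheck m d, p i = ζ ^ (evenSum m i))
    (hp2 : ∀ i ∉ Icheck m d, p i = 0)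
    (i : Fin (2*m+2) → ℤ) (hi : i ∈ Iset m d ((m : ℤ) * d - 2*m - 2))
    (hpair : ∀ l : ℕ, ∀ hl : l < m+1,
      i ⟨2*l, by omega⟩ + i ⟨2*l+1, by omega⟩ ≤ (d : ℤ) - 2)
    (j : Fin (2*m+2) → ℤ)
    (hj : ∀ l : ℕ, ∀ hl : l < m+1,
      j ⟨2*l, by omega⟩ = 0 ∧
      j ⟨2*l+1, by omega⟩ = (d : ℤ) - 2 - i ⟨2*l, by omega⟩ - i ⟨2*l+1, by omega⟩) :
    ∀ h ∈ Iset m d (d : ℤ), p (i + h) = ζ ^ (evenSum m i) * p (phiMap m d j + h) := by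
  intro h hh
  -- basic facts
  have hζ0 : ζ ≠ 0 := hζ.ne_zero (by omega)
  obtain ⟨hi0, _⟩ := hi
  obtain ⟨hh0, _⟩ := hh
  -- phiMap values
  have hφ0 : ∀ l : ℕ, (hl : l < m+1) →
      phiMap m d j ⟨2*l, by omega⟩ = 0 := by
    intro l hl
    simp [phiMap, Nat.even_mul]
  have hφ1 : ∀ l : ℕ, (hl : l < m+1) →
      phiMap m d j ⟨2*l+1, by omega⟩ = i ⟨2*l, by omega⟩ + i ⟨2*l+1, by omega⟩ := by
    intro l hl
    have := (hj l hl).2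
    simp only [phiMap]
    rw [if_neg (by simp [Nat.even_add_one, Nat.even_mul]), this]
    ring
  have hφnn : ∀ e, 0 ≤ phiMap m d j e := by
    intro e
    rcases Nat.even_or_odd (e : ℕ) with he | he
    · simp [phiMap, he]
    · obtain ⟨l, hl⟩ := he
      have hlm : l < m + 1 := by have := e.isLt; omega
      have : e = ⟨2*l+1, by omega⟩ := Fin.ext (by simpa using hl)
      rw [this, hφ1 l hlm]
      have := hi0 ⟨2*l, by omega⟩
      have := hi0 ⟨2*l+1, by omega⟩
      omega
  -- membership criterion
  have crit : ∀ x : Fin (2*m+2) → ℤ, (∀ e, 0 ≤ x e) →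
      (x ∈ Icheck m d ↔ ∀ l : ℕ, (hl : l < m+1) →
        x ⟨2*l, by omega⟩ + x ⟨2*l+1, by omega⟩ = (d : ℤ) - 2) := by
    intro x hx0
    constructor
    · exact fun hx => hx.2
    · intro hps
      refine ⟨?_, hps⟩
      intro e
      refine ⟨hx0 e, ?_⟩
      rcases Nat.even_or_odd (e : ℕ) with he | he
      · obtain ⟨l, hl⟩ := he
        have hlm : l < m + 1 := by have := e.isLt; omega
        have heq : e = ⟨2*l, by omega⟩ := Fin.ext (by simp only [Fin.val_mk]; omega)
        have := hps l hlm
        have := hx0 ⟨2*l+1, by omega⟩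
        rw [heq]; omega
      · obtain ⟨l, hl⟩ := he
        have hlm : l < m + 1 := by have := e.isLt; omega
        have heq : e = ⟨2*l+1, by omega⟩ := Fin.ext (by simp only [Fin.val_mk]; omega)
        have := hps l hlm
        have := hx0 ⟨2*l, by omega⟩
        rw [heq]; omega
  -- pair sums agree
  have hiff : (i + h ∈ Icheck m d) ↔ (phiMap m d j + h ∈ Icheck m d) := by
    rw [crit (i + h) (by intro e; exact add_nonneg (hi0 e).1 (hh0 e).1),
      crit (phiMap m d j + h) (by intro e; exact add_nonneg (hφnn e) (hh0 e).1)]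
    constructor <;> intro hps l hl <;> have := hps l hl <;>
      simp only [Pi.add_apply, hφ0 l hl, hφ1 l hl] at * <;> omega
  -- evenSum facts
  have hsum1 : evenSum m (i + h) = evenSum m i + evenSum m h := by
    unfold evenSum
    rw [← Finset.sum_add_distrib]
    rfl
  have hsum2 : evenSum m (phiMap m d j + h) = evenSum m h := by
    unfold evenSum
    refine Finset.sum_congr rfl ?_
    intro e he
    have : Even (e : ℕ) := (Finset.mem_filter.mp he).2
    simp [phiMap, this]
  by_cases hmem : i + h ∈ Icheck m d
  · rw [hp1 _ hmem, hp1 _ (hiff.mp hmem), hsum1, hsum2, zpow_add₀ hζ0]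
  · rw [hp2 _ hmem, hp2 _ (fun hc => hmem (hiff.mpr hc)), mul_zero]
end

section
/- Let n be even and d ≥ 3, and let ζ be a primitive 2d-th root of unity. Define the matrix M with rows indexed by I_{(n/2)d-n-2} and columns indexed by I_d, with entry M_{i,j} = p_{i+j}, where p_i := ζ^{i_0+i_2+⋯+i_n} if 0 ≤ i_e ≤ d-2 for all e and i_{2l-2}+i_{2l-1} = d-2 for all l = 1,...,n/2+1, and p_i := 0 otherwise. Then rank(M) = binom(n/2 + d, d) − (n/2 + 1)^2. -/
namespace Stmt7

def pe (m : ℕ) (l : Fin (m+1)) : Fin (2*m+2) := ⟨2*l.1, by omega⟩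
def po (m : ℕ) (l : Fin (m+1)) : Fin (2*m+2) := ⟨2*l.1+1, by omega⟩

def ps (m : ℕ) (i : Fin (2*m+2) → ℤ) (l : Fin (m+1)) : ℤ := i (pe m l) + i (po m l)

variable {m d : ℕ}

lemma pe_injective : Function.Injective (pe m) := by
  intro a b h
  simp only [pe, Fin.mk.injEq, Fin.ext_iff] at h ⊢
  omega

lemma po_injective : Function.Injective (po m) := by
  intro a b h
  simp only [po, Fin.mk.injEq, Fin.ext_iff] at h ⊢
  omega

lemma image_pe : Finset.image (pe m) Finset.univ
    = Finset.univ.filter (fun e : Fin (2*m+2) => Even (e : ℕ)) := by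
  ext e
  simp only [Finset.mem_image, Finset.mem_univ, true_and, Finset.mem_filter, Nat.even_iff]
  constructor
  · rintro ⟨a, rfl⟩; simp only [pe]; omega
  · rintro h
    exact ⟨⟨e.1/2, by have := e.2; omega⟩, by apply Fin.ext; simp only [pe]; omega⟩

lemma image_po : Finset.image (po m) Finset.univ
    = Finset.univ.filter (fun e : Fin (2*m+2) => ¬ Even (e : ℕ)) := by
  ext e
  simp only [Finset.mem_image, Finset.mem_univ, true_and, Finset.mem_filter, Nat.even_iff]
  constructor
  · rintro ⟨a, rfl⟩; simp only [po]; omega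
  · rintro h
    exact ⟨⟨e.1/2, by have := e.2; omega⟩, by apply Fin.ext; simp only [po]; omega⟩

lemma evenSum_eq (i : Fin (2*m+2) → ℤ) : evenSum m i = ∑ l : Fin (m+1), i (pe m l) := by
  rw [evenSum, ← image_pe, Finset.sum_image (fun a _ b _ h => pe_injective h)]

lemma oddSum_eq (i : Fin (2*m+2) → ℤ) :
    ∑ e ∈ Finset.univ.filter (fun e : Fin (2*m+2) => ¬ Even (e : ℕ)), i e
      = ∑ l : Fin (m+1), i (po m l) := by
  rw [← image_po, Finset.sum_image (fun a _ b _ h => po_injective h)]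

lemma sum_eq_ps (i : Fin (2*m+2) → ℤ) : ∑ e, i e = ∑ l, ps m i l := by
  rw [← Finset.sum_filter_add_sum_filter_not Finset.univ
    (fun e : Fin (2*m+2) => Even (e : ℕ)) i]
  rw [show (Finset.univ.filter (fun e : Fin (2*m+2) => Even (e : ℕ))).sum i = evenSum m i from rfl]
  rw [evenSum_eq, oddSum_eq, ← Finset.sum_add_distrib]
  rfl

lemma evenSum_add (i j : Fin (2*m+2) → ℤ) :
    evenSum m (i + j) = evenSum m i + evenSum m j := by
  simp [evenSum, Finset.sum_add_distrib]

lemma mem_Icheck (i : Fin (2*m+2) → ℤ) :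
    i ∈ Icheck m d ↔ (∀ e, 0 ≤ i e ∧ i e ≤ (d:ℤ)-2) ∧
      ∀ l : Fin (m+1), ps m i l = (d:ℤ)-2 := by
  constructor
  · rintro ⟨h1, h2⟩; exact ⟨h1, fun l => h2 l.1 l.2⟩
  · rintro ⟨h1, h2⟩; exact ⟨h1, fun l hl => h2 ⟨l, hl⟩⟩

lemma ps_add (i j : Fin (2*m+2) → ℤ) (l : Fin (m+1)) :
    ps m (i + j) l = ps m i l + ps m j l := by
  simp [ps]; ring

lemma add_mem_Icheck_iff {i j : Fin (2*m+2) → ℤ} {N : ℤ}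
    (hi : i ∈ Iset m d N) (hj : j ∈ Iset m d (d:ℤ)) :
    (i + j ∈ Icheck m d) ↔ ∀ l, ps m j l = ((d:ℤ)-2) - ps m i l := by
  rw [mem_Icheck]
  constructor
  · rintro ⟨-, h2⟩ l
    have := h2 l
    rw [ps_add] at this
    linarith
  · intro h
    refine ⟨?_, ?_⟩
    · intro e
      have hnn : ∀ f, 0 ≤ (i+j) f := fun f => by
        simp only [Pi.add_apply]
        have := (hi.1 f).1; have := (hj.1 f).1; linarith
      have hl2 : e.1/2 < m + 1 := by have := e.2; omega
      have hps : ps m (i+j) ⟨e.1/2, hl2⟩ = (d:ℤ)-2 := by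
        rw [ps_add]; have := h ⟨e.1/2, hl2⟩; linarith
      have hcase : e = pe m ⟨e.1/2, hl2⟩ ∨ e = po m ⟨e.1/2, hl2⟩ := by
        rcases Nat.even_or_odd e.1 with hpar | hpar
        · rw [Nat.even_iff] at hpar; left; apply Fin.ext; simp only [pe]; omega
        · rw [Nat.odd_iff] at hpar; right; apply Fin.ext; simp only [po]; omega
      have hnn1 := hnn (pe m ⟨e.1/2, hl2⟩)
      have hnn2 := hnn (po m ⟨e.1/2, hl2⟩)
      rw [ps] at hps
      constructor
      · rcases hcase with he | he <;> rw [he]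
        · exact hnn1
        · exact hnn2
      · rcases hcase with he | he <;> rw [he] <;> linarith
    · intro l
      rw [ps_add]
      have := h l
      linarith

def sig (m d : ℕ) (i : Fin (2*m+2) → ℤ) (l : Fin (m+1)) : ℤ := (d:ℤ) - 2 - ps m i l

noncomputable def rvec (m d : ℕ) (ζ : ℂ) (s : Fin (m+1) → ℤ) : ↥(Iset m d (d:ℤ)) → ℂ :=
  fun h => if ps m h.1 = s then ζ ^ (evenSum m h.1) else 0

variable {ζ : ℂ} {p : (Fin (2*m+2) → ℤ) → ℂ}

lemma row_eq (hζ0 : ζ ≠ 0)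
    (hp1 : ∀ i ∈ Icheck m d, p i = ζ ^ (evenSum m i))
    (hp2 : ∀ i ∉ Icheck m d, p i = 0)
    {i : Fin (2*m+2) → ℤ} (hi : i ∈ Iset m d ((m : ℤ) * d - 2*m - 2)) :
    (fun h : ↥(Iset m d (d:ℤ)) => p (i + h.1))
      = ζ ^ (evenSum m i) • rvec m d ζ (sig m d i) := by
  funext h
  by_cases hc : ps m h.1 = sig m d i
  · have hmem : i + h.1 ∈ Icheck m d := by
      rw [add_mem_Icheck_iff hi h.2]
      intro l
      have := congrFun hc l
      simp only [sig] at this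
      linarith
    rw [hp1 _ hmem, evenSum_add, zpow_add₀ hζ0]
    simp [rvec, hc, mul_comm]
  · have hmem : i + h.1 ∉ Icheck m d := by
      intro hmem
      apply hc
      funext l
      have := (add_mem_Icheck_iff hi h.2).1 hmem l
      simp only [sig]
      linarith
    rw [hp2 _ hmem]
    simp [rvec, hc]

lemma sum_sig {i : Fin (2*m+2) → ℤ} (hi : i ∈ Iset m d ((m : ℤ) * d - 2*m - 2)) :
    ∑ l, sig m d i l = d := by
  have hs : ∑ l, ps m i l = (m : ℤ) * d - 2*m - 2 := by rw [← sum_eq_ps]; exact hi.2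
  simp only [sig, Finset.sum_sub_distrib, hs, Finset.sum_const, Finset.card_univ,
    Fintype.card_fin, nsmul_eq_mul]
  push_cast
  ring

lemma sig_le {i : Fin (2*m+2) → ℤ} (hi : i ∈ Iset m d ((m : ℤ) * d - 2*m - 2)) (l : Fin (m+1)) :
    sig m d i l ≤ (d:ℤ) - 2 := by
  have h1 := (hi.1 (pe m l)).1
  have h2 := (hi.1 (po m l)).1
  simp only [sig, ps]
  linarith

/-- witness row index realizing a given `s`. -/
def iwit (m d : ℕ) (s : Fin (m+1) → ℤ) : Fin (2*m+2) → ℤ :=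
  fun e => if e.1 % 2 = 0 then (d:ℤ) - 2 - s ⟨e.1/2, by have := e.2; omega⟩ else 0

/-- witness column index with pair sums `s`. -/
def jwit (m : ℕ) (s : Fin (m+1) → ℤ) : Fin (2*m+2) → ℤ :=
  fun e => if e.1 % 2 = 0 then s ⟨e.1/2, by have := e.2; omega⟩ else 0

lemma ps_iwit (s : Fin (m+1) → ℤ) (l : Fin (m+1)) :
    ps m (iwit m d s) l = (d:ℤ) - 2 - s l := by
  have h1 : (2*l.1) % 2 = 0 := by omega
  have h2 : (2*l.1+1) % 2 = 1 := by omega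
  have h3 : (2*l.1)/2 = l.1 := by omega
  simp [ps, iwit, pe, po, h1, h2, h3]

lemma ps_jwit (s : Fin (m+1) → ℤ) (l : Fin (m+1)) :
    ps m (jwit m s) l = s l := by
  have h1 : (2*l.1) % 2 = 0 := by omega
  have h2 : (2*l.1+1) % 2 = 1 := by omega
  have h3 : (2*l.1)/2 = l.1 := by omega
  simp [ps, jwit, pe, po, h1, h2, h3]

lemma sig_iwit (s : Fin (m+1) → ℤ) : sig m d (iwit m d s) = s := by
  funext l
  simp [sig, ps_iwit]

lemma iwit_mem (hd : 3 ≤ d) {s : Fin (m+1) → ℤ} (hb : ∀ l, 0 ≤ s l ∧ s l ≤ (d:ℤ) - 2)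
    (hsum : ∑ l, s l = d) : iwit m d s ∈ Iset m d ((m : ℤ) * d - 2*m - 2) := by
  constructor
  · intro e
    simp only [iwit]
    split_ifs with hpar
    · have := hb ⟨e.1/2, by have := e.2; omega⟩
      constructor <;> linarith [this.1, this.2]
    · constructor
      · rfl
      · have : (3:ℤ) ≤ d := by exact_mod_cast hd
        linarith
  · rw [sum_eq_ps]
    have : ∀ l, ps m (iwit m d s) l = (d:ℤ) - 2 - s l := ps_iwit s
    rw [Finset.sum_congr rfl (fun l _ => this l)]
    simp only [Finset.sum_sub_distrib, hsum, Finset.sum_const, Finset.card_univ,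
      Fintype.card_fin, nsmul_eq_mul]
    push_cast
    ring

lemma jwit_mem (hd : 3 ≤ d) {s : Fin (m+1) → ℤ} (hb : ∀ l, 0 ≤ s l ∧ s l ≤ (d:ℤ) - 2)
    (hsum : ∑ l, s l = d) : jwit m s ∈ Iset m d (d:ℤ) := by
  constructor
  · intro e
    simp only [jwit]
    split_ifs with hpar
    · exact hb _
    · constructor
      · rfl
      · have : (3:ℤ) ≤ d := by exact_mod_cast hd
        linarith
  · rw [sum_eq_ps]
    rw [Finset.sum_congr rfl (fun l _ => ps_jwit s l)]
    exact hsum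

/-! ### The index set of normalized rows -/

def Sfin (m d : ℕ) : Finset (Fin (m+1) → ℕ) :=
  (Finset.piAntidiag (Finset.univ : Finset (Fin (m+1))) d).filter (fun f => ∀ e, f e ≤ d - 2)

lemma mem_Sfin {f : Fin (m+1) → ℕ} :
    f ∈ Sfin m d ↔ (∑ l, f l = d) ∧ ∀ e, f e ≤ d - 2 := by
  simp [Sfin, Finset.mem_piAntidiag]

def cz (m : ℕ) (f : Fin (m+1) → ℕ) : Fin (m+1) → ℤ := fun l => (f l : ℤ)

lemma cz_injective : Function.Injective (cz m) := by
  intro a b h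
  funext l
  have h2 : ((a l : ℤ)) = (b l : ℤ) := congrFun h l
  exact_mod_cast h2

lemma cz_bounds (hd : 3 ≤ d) {f : Fin (m+1) → ℕ} (hf : f ∈ Sfin m d) :
    ∀ l, 0 ≤ cz m f l ∧ cz m f l ≤ (d:ℤ) - 2 := by
  intro l
  have h1 := (mem_Sfin.1 hf).2 l
  simp only [cz]
  omega

lemma cz_sum {f : Fin (m+1) → ℕ} (hf : f ∈ Sfin m d) : ∑ l, cz m f l = d := by
  have := (mem_Sfin.1 hf).1
  simp only [cz]
  exact_mod_cast this

noncomputable def vfam (m d : ℕ) (ζ : ℂ) : ↥(Sfin m d) → (↥(Iset m d (d:ℤ)) → ℂ) :=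
  fun f => rvec m d ζ (cz m f.1)

lemma vfam_li (hd : 3 ≤ d) (hζ0 : ζ ≠ 0) : LinearIndependent ℂ (vfam m d ζ) := by
  rw [Fintype.linearIndependent_iff]
  intro g hg f
  have hb := cz_bounds hd f.2
  have hsum := cz_sum f.2
  have hjm := jwit_mem hd hb hsum
  have hps : ps m (jwit m (cz m f.1)) = cz m f.1 := funext (ps_jwit _)
  have hev := congrFun hg (⟨jwit m (cz m f.1), hjm⟩ : ↥(Iset m d (d:ℤ)))
  simp only [Finset.sum_apply, Pi.smul_apply, smul_eq_mul, Pi.zero_apply] at hev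
  rw [Fintype.sum_eq_single f ?_] at hev
  · simp only [vfam, rvec, hps, if_pos rfl] at hev
    rcases mul_eq_zero.1 hev with h | h
    · exact h
    · exact absurd h (zpow_ne_zero _ hζ0)
  · intro f' hf'
    have hne : ps m (jwit m (cz m f.1)) ≠ cz m f'.1 := by
      rw [hps]
      intro heq
      exact hf' (Subtype.ext (cz_injective heq.symm))
    simp only [vfam, rvec, if_neg hne, mul_zero]

lemma span_eq (hd : 3 ≤ d) (hζ0 : ζ ≠ 0)
    (hp1 : ∀ i ∈ Icheck m d, p i = ζ ^ (evenSum m i))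
    (hp2 : ∀ i ∉ Icheck m d, p i = 0) :
    Submodule.span ℂ (Set.range
        (fun i : ↥(Iset m d ((m : ℤ) * d - 2*m - 2)) =>
          (fun h : ↥(Iset m d (d : ℤ)) => p (i.1 + h.1))))
      = Submodule.span ℂ (Set.range (vfam m d ζ)) := by
  apply le_antisymm <;> rw [Submodule.span_le]
  · rintro x ⟨i, rfl⟩
    rw [SetLike.mem_coe]
    show (fun h : ↥(Iset m d (d : ℤ)) => p (i.1 + h.1)) ∈ _
    rw [row_eq hζ0 hp1 hp2 i.2]
    apply Submodule.smul_mem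
    by_cases hpos : ∀ l, 0 ≤ sig m d i.1 l
    · set f : Fin (m+1) → ℕ := fun l => (sig m d i.1 l).toNat with hfdef
      have hcz : cz m f = sig m d i.1 := funext fun l => Int.toNat_of_nonneg (hpos l)
      have hfmem : f ∈ Sfin m d := by
        rw [mem_Sfin]
        constructor
        · have hs := sum_sig i.2
          rw [← hcz] at hs
          simp only [cz] at hs
          exact_mod_cast hs
        · intro e
          have := sig_le i.2 e
          rw [← hcz] at this
          simp only [cz] at this
          omega
      apply Submodule.subset_span
      exact ⟨⟨f, hfmem⟩, by simp [vfam, hcz]⟩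
    · push_neg at hpos
      obtain ⟨l, hl⟩ := hpos
      have hz : rvec m d ζ (sig m d i.1) = 0 := by
        funext h
        have hne : ps m h.1 ≠ sig m d i.1 := by
          intro heq
          have := congrFun heq l
          have h1 := (h.2.1 (pe m l)).1
          have h2 := (h.2.1 (po m l)).1
          rw [ps] at this
          linarith
        simp only [rvec, if_neg hne, Pi.zero_apply]
      rw [hz]
      exact Submodule.zero_mem _
  · rintro x ⟨f, rfl⟩
    have hb := cz_bounds hd f.2
    have hsum := cz_sum f.2
    have him := iwit_mem hd hb hsum
    have hr := row_eq hζ0 hp1 hp2 him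
    rw [sig_iwit] at hr
    have key : vfam m d ζ f
        = ζ ^ (-(evenSum m (iwit m d (cz m f.1))))
          • (fun h : ↥(Iset m d (d:ℤ)) => p (iwit m d (cz m f.1) + h.1)) := by
      rw [hr, smul_smul, ← zpow_add₀ hζ0]
      simp [vfam]
    rw [SetLike.mem_coe, key]
    exact Submodule.smul_mem _ _
      (Submodule.subset_span ⟨⟨iwit m d (cz m f.1), him⟩, rfl⟩)

/-! ### Counting -/

lemma card_T : (Finset.piAntidiag (Finset.univ : Finset (Fin (m+1))) d).card
    = (m+d).choose d := by
  rw [← Finset.map_sym_eq_piAntidiag (Finset.univ : Finset (Fin (m+1))) d, Finset.card_map]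
  have huniv : (Finset.univ : Finset (Fin (m+1))).sym d
      = (Finset.univ : Finset (Sym (Fin (m+1)) d)) := by
    ext a
    simp [Finset.mem_sym_iff]
  rw [huniv, Finset.card_univ, Sym.card_sym_eq_choose, Fintype.card_fin]
  congr 1
  omega

def phi (m d : ℕ) : Fin (m+1) × Fin (m+1) → (Fin (m+1) → ℕ) :=
  fun q x => (if x = q.1 then d-1 else 0) + (if x = q.2 then 1 else 0)

lemma phi_inj (hd : 3 ≤ d) : Function.Injective (phi m d) := by
  rintro ⟨a, b⟩ ⟨a', b'⟩ h
  have haa : a = a' := by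
    by_contra hne
    have h1 := congrFun h a
    simp only [phi, if_pos rfl, if_neg hne] at h1
    split_ifs at h1 <;> omega
  subst haa
  have hbb : b = b' := by
    by_contra hne
    have h1 := congrFun h b
    simp only [phi, if_pos rfl, if_neg hne] at h1
    split_ifs at h1 <;> omega
  rw [hbb]

lemma sum_one {α : Type*} [DecidableEq α] {s : Finset α} {f : α → ℕ}
    (h : ∑ x ∈ s, f x = 1) :
    ∃ b ∈ s, f b = 1 ∧ ∀ x ∈ s, x ≠ b → f x = 0 := by
  have hex : ∃ b ∈ s, f b ≠ 0 := by
    by_contra hc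
    push_neg at hc
    rw [Finset.sum_eq_zero hc] at h
    omega
  obtain ⟨b, hb, hb0⟩ := hex
  have hle : f b ≤ 1 := h ▸ Finset.single_le_sum (fun _ _ => Nat.zero_le _) hb
  have hfb : f b = 1 := by omega
  refine ⟨b, hb, hfb, fun x hx hxb => ?_⟩
  have hsplit : f b + ∑ y ∈ s.erase b, f y = 1 := by
    rw [Finset.add_sum_erase s f hb]
    exact h
  have hzero : ∑ y ∈ s.erase b, f y = 0 := by omega
  exact Finset.sum_eq_zero_iff.1 hzero x (Finset.mem_erase.2 ⟨hxb, hx⟩)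

lemma bad_eq (hd : 3 ≤ d) :
    (Finset.piAntidiag (Finset.univ : Finset (Fin (m+1))) d).filter
        (fun f => ¬ ∀ e, f e ≤ d - 2)
      = Finset.image (phi m d) Finset.univ := by
  ext f
  simp only [Finset.mem_filter, Finset.mem_piAntidiag, Finset.mem_image, Finset.mem_univ,
    true_and, not_forall]
  constructor
  · rintro ⟨⟨hsum, -⟩, e, he⟩
    have hfe_le : f e ≤ d :=
      hsum ▸ Finset.single_le_sum (fun _ _ => Nat.zero_le _) (Finset.mem_univ e)
    have hsplit : f e + ∑ x ∈ Finset.univ.erase e, f x = d := by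
      rw [Finset.add_sum_erase _ f (Finset.mem_univ e)]
      exact hsum
    by_cases hfd : f e = d
    · refine ⟨(e, e), ?_⟩
      have hz : ∀ x ∈ Finset.univ.erase e, f x = 0 := by
        rw [← Finset.sum_eq_zero_iff]
        omega
      funext x
      by_cases hx : x = e
      · subst hx
        simp [phi]
        omega
      · have h0 := hz x (Finset.mem_erase.2 ⟨hx, Finset.mem_univ x⟩)
        simp [phi, hx]
        omega
    · have hfe : f e = d - 1 := by omega
      have hrest : ∑ x ∈ Finset.univ.erase e, f x = 1 := by omega
      obtain ⟨b, hbmem, hb1, hb0⟩ := sum_one hrest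
      have hbe : b ≠ e := (Finset.mem_erase.1 hbmem).1
      refine ⟨(e, b), ?_⟩
      funext x
      by_cases hx : x = e
      · subst hx
        simp [phi, Ne.symm hbe]
        omega
      · by_cases hxb : x = b
        · subst hxb
          simp [phi, hbe]
          omega
        · have h0 := hb0 x (Finset.mem_erase.2 ⟨hx, Finset.mem_univ x⟩) hxb
          simp [phi, hx, hxb]
          omega
  · rintro ⟨⟨a, b⟩, rfl⟩
    refine ⟨⟨?_, by simp⟩, a, ?_⟩
    · show ∑ x, ((if x = a then d-1 else 0) + (if x = b then 1 else 0)) = d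
      rw [Finset.sum_add_distrib]
      rw [Finset.sum_ite_eq' Finset.univ a (fun _ => d-1),
        Finset.sum_ite_eq' Finset.univ b (fun _ => 1)]
      simp
      omega
    · simp [phi]
      split_ifs <;> omega

lemma card_Sfin (hd : 3 ≤ d) : (Sfin m d).card + (m+1)^2 = (m+d).choose d := by
  have hsplit := Finset.card_filter_add_card_filter_not
    (s := Finset.piAntidiag (Finset.univ : Finset (Fin (m+1))) d)
    (fun f => ∀ e, f e ≤ d - 2)
  rw [card_T] at hsplit
  have hbad : ((Finset.piAntidiag (Finset.univ : Finset (Fin (m+1))) d).filter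
      (fun f => ¬ ∀ e, f e ≤ d - 2)).card = (m+1)^2 := by
    rw [bad_eq hd, Finset.card_image_of_injective _ (phi_inj hd), Finset.card_univ]
    simp [Fintype.card_prod, sq]
  rw [hbad] at hsplit
  exact hsplit

end Stmt7

/-- The rank (dimension of the row space) of the period matrix `M = [p_{i+j}]`, with rows
indexed by `I_{(n/2)d-n-2}` and columns by `I_d`, equals `binom(n/2+d, d) - (n/2+1)^2`. -/
theorem stmt_7 (m d : ℕ) (hd : 3 ≤ d) (ζ : ℂ) (hζ : IsPrimitiveRoot ζ (2*d))
    (p : (Fin (2*m+2) → ℤ) → ℂ)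
    (hp1 : ∀ i ∈ Icheck m d, p i = ζ ^ (evenSum m i))
    (hp2 : ∀ i ∉ Icheck m d, p i = 0) :
    (Module.finrank ℂ (Submodule.span ℂ (Set.range
        (fun i : ↥(Iset m d ((m : ℤ) * d - 2*m - 2)) =>
          (fun h : ↥(Iset m d (d : ℤ)) => p (i.1 + h.1))))) : ℤ) =
      (Nat.choose (m + d) d : ℤ) - (m + 1)^2 := by
  have hζ0 : ζ ≠ 0 := hζ.ne_zero (by omega)
  have h1 : Module.finrank ℂ (Submodule.span ℂ (Set.range
      (fun i : ↥(Iset m d ((m : ℤ) * d - 2*m - 2)) =>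
        (fun h : ↥(Iset m d (d : ℤ)) => p (i.1 + h.1))))) = (Stmt7.Sfin m d).card := by
    rw [Stmt7.span_eq hd hζ0 hp1 hp2, finrank_span_eq_card (Stmt7.vfam_li hd hζ0),
      Fintype.card_coe]
  rw [h1]
  have h2 := Stmt7.card_Sfin (m := m) hd
  have h3 : ((Stmt7.Sfin m d).card : ℤ) + ((m:ℤ)+1)^2 = ((m+d).choose d : ℤ) := by
    exact_mod_cast congrArg (Nat.cast : ℕ → ℤ) h2
  linarith
end

section
/- Let n be even and d ≥ 3, and let ζ be a primitive 2d-th root of unity. For the period matrix M = [p_{i+j}] (rows indexed by I_{(n/2)d-n-2}, columns by I_d, with p as in the linear-cycle case all d_k = 1), the set of rows { M_{φ(j), •} : j ∈ B } is linearly independent over C and spans the row space of M. -/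
/-- The subset `B` of `I_d` of vectors whose even-index entries vanish. -/
def Bset (m d : ℕ) : Set (Fin (2*m+2) → ℤ) :=
  {j | j ∈ Iset m d (d : ℤ) ∧ ∀ e : Fin (2*m+2), Even (e : ℕ) → j e = 0}


-- auxiliary lemmas

def extFun (m : ℕ) (f : Fin (2*m+2) → ℤ) : ℕ → ℤ :=
  fun e => if h : e < 2*m+2 then f ⟨e, h⟩ else 0

lemma extFun_eq (m : ℕ) (f : Fin (2*m+2) → ℤ) (e : Fin (2*m+2)) :
    extFun m f e = f e := dif_pos e.isLt

lemma extFun_mk (m : ℕ) (f : Fin (2*m+2) → ℤ) (e : ℕ) (h : e < 2*m+2) :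
    extFun m f e = f ⟨e, h⟩ := dif_pos h

lemma sum_pair (k : ℕ) (g : ℕ → ℤ) :
    ∑ e ∈ Finset.range (2*k), g e = ∑ l ∈ Finset.range k, (g (2*l) + g (2*l+1)) := by
  induction k with
  | zero => simp
  | succ k ih =>
      rw [show 2*(k+1) = 2*k+1+1 by ring, Finset.sum_range_succ, Finset.sum_range_succ,
        Finset.sum_range_succ, ih]
      ring_nf

lemma fin_sum_pairs (m : ℕ) (f : Fin (2*m+2) → ℤ) :
    ∑ e, f e = ∑ l ∈ Finset.range (m+1), (extFun m f (2*l) + extFun m f (2*l+1)) := by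
  have h1 : ∑ e, f e = ∑ e : Fin (2*m+2), extFun m f e :=
    Finset.sum_congr rfl (fun e _ => (extFun_eq m f e).symm)
  rw [h1, Fin.sum_univ_eq_sum_range, show 2*m+2 = 2*(m+1) by ring, sum_pair]

lemma pair_decomp (m : ℕ) (e : Fin (2*m+2)) :
    ∃ l, l < m + 1 ∧ ((e:ℕ) = 2*l ∨ (e:ℕ) = 2*l+1) :=
  ⟨(e:ℕ)/2, by omega, by omega⟩

lemma phi_even (m d : ℕ) (j : Fin (2*m+2) → ℤ) (e : Fin (2*m+2)) (he : Even (e:ℕ)) :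
    phiMap m d j e = 0 := if_pos he

lemma phi_odd (m d : ℕ) (j : Fin (2*m+2) → ℤ) (e : Fin (2*m+2)) (he : ¬ Even (e:ℕ)) :
    phiMap m d j e = (d:ℤ) - 2 - j e := if_neg he

lemma evenSum_add (m : ℕ) (i h : Fin (2*m+2) → ℤ) :
    evenSum m (i + h) = evenSum m i + evenSum m h := by
  simp [evenSum, Finset.sum_add_distrib]

lemma evenSum_phi (m d : ℕ) (j : Fin (2*m+2) → ℤ) : evenSum m (phiMap m d j) = 0 := by
  apply Finset.sum_eq_zero
  intro e he
  simp only [Finset.mem_filter] at he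
  exact phi_even m d j e he.2

lemma evenSum_zeroEven (m : ℕ) (j : Fin (2*m+2) → ℤ)
    (hj : ∀ e : Fin (2*m+2), Even (e:ℕ) → j e = 0) : evenSum m j = 0 := by
  apply Finset.sum_eq_zero
  intro e he
  simp only [Finset.mem_filter] at he
  exact hj e he.2

/-- membership of `i + h` in `Ǐ`. -/
lemma mem_Icheck_iff (m d : ℕ) (i h : Fin (2*m+2) → ℤ)
    (hi0 : ∀ e, 0 ≤ i e)
    (hips : ∀ l : ℕ, (hl : l < m+1) → i ⟨2*l, by omega⟩ + i ⟨2*l+1, by omega⟩ ≤ (d:ℤ) - 2)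
    (hh : h ∈ Iset m d d) :
    (i + h ∈ Icheck m d) ↔ ∀ l : ℕ, (hl : l < m+1) →
      h ⟨2*l, by omega⟩ + h ⟨2*l+1, by omega⟩
        = (d:ℤ) - 2 - i ⟨2*l, by omega⟩ - i ⟨2*l+1, by omega⟩ := by
  constructor
  · rintro ⟨_, hps⟩ l hl
    have := hps l hl
    simp only [Pi.add_apply] at this
    linarith
  · intro hP
    constructor
    · intro e
      obtain ⟨l, hl, hcase⟩ := pair_decomp m e
      have h1 := hP l hl
      have h2 := hips l hl
      have hi1 := hi0 ⟨2*l, by omega⟩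
      have hi2 := hi0 ⟨2*l+1, by omega⟩
      have hh1 := (hh.1 ⟨2*l, by omega⟩).1
      have hh2 := (hh.1 ⟨2*l+1, by omega⟩).1
      rcases hcase with hc | hc
      · have he : e = (⟨2*l, by omega⟩ : Fin (2*m+2)) := Fin.ext hc
        rw [he]
        simp only [Pi.add_apply]
        constructor <;> linarith
      · have he : e = (⟨2*l+1, by omega⟩ : Fin (2*m+2)) := Fin.ext hc
        rw [he]
        simp only [Pi.add_apply]
        constructor <;> linarith
    · intro l hl
      have := hP l hl
      simp only [Pi.add_apply]
      linarith

/-- membership of `φ(j) + h` in `Ǐ`. -/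
lemma mem_phi_Icheck_iff (m d : ℕ) (hd : 3 ≤ d) (j h : Fin (2*m+2) → ℤ)
    (hj : j ∈ Bset m d) (hh : h ∈ Iset m d d) :
    (phiMap m d j + h ∈ Icheck m d) ↔ ∀ l : ℕ, (hl : l < m+1) →
      h ⟨2*l, by omega⟩ + h ⟨2*l+1, by omega⟩ = j ⟨2*l+1, by omega⟩ := by
  have hje : ∀ l : ℕ, (hl : l < m+1) → phiMap m d j ⟨2*l, by omega⟩ = 0 :=
    fun l hl => phi_even m d j _ (even_two_mul l)
  have hjo : ∀ l : ℕ, (hl : l < m+1) →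
      phiMap m d j ⟨2*l+1, by omega⟩ = (d:ℤ) - 2 - j ⟨2*l+1, by omega⟩ :=
    fun l hl => phi_odd m d j _ (by simp [Nat.even_iff])
  constructor
  · rintro ⟨_, hps⟩ l hl
    have := hps l hl
    simp only [Pi.add_apply, hje l hl, hjo l hl] at this
    linarith
  · intro hP
    constructor
    · intro e
      obtain ⟨l, hl, hcase⟩ := pair_decomp m e
      have h1 := hP l hl
      have hj1 := (hj.1.1 ⟨2*l+1, by omega⟩)
      have hh1 := (hh.1 ⟨2*l, by omega⟩)
      have hh2 := (hh.1 ⟨2*l+1, by omega⟩).1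
      rcases hcase with hc | hc
      · have he : e = (⟨2*l, by omega⟩ : Fin (2*m+2)) := Fin.ext hc
        rw [he]
        simp only [Pi.add_apply, hje l hl]
        constructor <;> linarith [hh1.1, hh1.2]
      · have he : e = (⟨2*l+1, by omega⟩ : Fin (2*m+2)) := Fin.ext hc
        rw [he]
        simp only [Pi.add_apply, hjo l hl]
        constructor <;> linarith [hj1.1, hj1.2, hh1.1]
    · intro l hl
      have := hP l hl
      simp only [Pi.add_apply, hje l hl, hjo l hl]
      linarith

lemma Bset_eq_iff (m d : ℕ) (j h : Fin (2*m+2) → ℤ) (hj : j ∈ Bset m d) (hh : h ∈ Bset m d)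
    (hodd : ∀ l : ℕ, (hl : l < m+1) → h ⟨2*l+1, by omega⟩ = j ⟨2*l+1, by omega⟩) : h = j := by
  funext e
  obtain ⟨l, hl, hcase⟩ := pair_decomp m e
  rcases hcase with hc | hc
  · have hev : Even (e:ℕ) := by rw [Nat.even_iff]; omega
    rw [hj.2 e hev, hh.2 e hev]
  · have he : e = (⟨2*l+1, by omega⟩ : Fin (2*m+2)) := Fin.ext hc
    rw [he]; exact hodd l hl

/-- The delta property of the submatrix. -/
lemma delta_lemma (m d : ℕ) (hd : 3 ≤ d) (ζ : ℂ)
    (p : (Fin (2*m+2) → ℤ) → ℂ)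
    (hp1 : ∀ i ∈ Icheck m d, p i = ζ ^ (evenSum m i))
    (hp2 : ∀ i ∉ Icheck m d, p i = 0)
    (j h : Fin (2*m+2) → ℤ) (hj : j ∈ Bset m d) (hh : h ∈ Bset m d) :
    p (phiMap m d j + h) = if h = j then 1 else 0 := by
  by_cases hcase : h = j
  · subst hcase
    rw [if_pos rfl]
    have hmem : phiMap m d h + h ∈ Icheck m d := by
      rw [mem_phi_Icheck_iff m d hd h h hh hh.1]
      intro l hl
      have : h ⟨2*l, by omega⟩ = 0 := hh.2 _ (even_two_mul l)
      rw [this]; ring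
    rw [hp1 _ hmem, evenSum_add, evenSum_phi, evenSum_zeroEven m h hh.2]
    norm_num
  · rw [if_neg hcase]
    apply hp2
    intro hmem
    rw [mem_phi_Icheck_iff m d hd j h hj hh.1] at hmem
    apply hcase
    apply Bset_eq_iff m d j h hj hh
    intro l hl
    have h0 : h ⟨2*l, by omega⟩ = 0 := hh.2 _ (even_two_mul l)
    have := hmem l hl
    rw [h0] at this
    linarith

/-- The companion `j` of a row index `i`. -/
def jfun (m d : ℕ) (i : Fin (2*m+2) → ℤ) : Fin (2*m+2) → ℤ :=
  fun e => if h : Even (e:ℕ) then 0 else (d:ℤ) - 2 - i ⟨(e:ℕ)-1, by omega⟩ - i e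

lemma jfun_odd (m d : ℕ) (i : Fin (2*m+2) → ℤ) (l : ℕ) (hl : l < m+1) :
    jfun m d i ⟨2*l+1, by omega⟩ = (d:ℤ) - 2 - i ⟨2*l, by omega⟩ - i ⟨2*l+1, by omega⟩ := by
  rw [jfun, dif_neg (by simp [Nat.even_iff])]
  congr 2

lemma jfun_even (m d : ℕ) (i : Fin (2*m+2) → ℤ) (e : Fin (2*m+2)) (he : Even (e:ℕ)) :
    jfun m d i e = 0 := dif_pos he

/-- `jfun` lands in `B`. -/
lemma jfun_mem_Bset (m d : ℕ) (hd : 3 ≤ d) (i : Fin (2*m+2) → ℤ)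
    (hi : i ∈ Iset m d ((m : ℤ) * d - 2*m - 2))
    (hips : ∀ l : ℕ, (hl : l < m+1) → i ⟨2*l, by omega⟩ + i ⟨2*l+1, by omega⟩ ≤ (d:ℤ) - 2) :
    jfun m d i ∈ Bset m d := by
  have hbd : ∀ e, 0 ≤ jfun m d i e ∧ jfun m d i e ≤ (d:ℤ) - 2 := by
    intro e
    obtain ⟨l, hl, hcase⟩ := pair_decomp m e
    rcases hcase with hc | hc
    · rw [jfun_even m d i e (by rw [Nat.even_iff]; omega)]
      constructor <;> [rfl; omega]
    · have he : e = (⟨2*l+1, by omega⟩ : Fin (2*m+2)) := Fin.ext hc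
      rw [he, jfun_odd m d i l hl]
      have h2 := hips l hl
      have hi1 := (hi.1 ⟨2*l, by omega⟩).1
      have hi2 := (hi.1 ⟨2*l+1, by omega⟩).1
      constructor <;> linarith
  refine ⟨⟨hbd, ?_⟩, fun e he => jfun_even m d i e he⟩
  -- total sum is d
  have hsum := fin_sum_pairs m (jfun m d i)
  have hsumi := fin_sum_pairs m i
  rw [hi.2] at hsumi
  rw [hsum]
  have : ∀ l ∈ Finset.range (m+1),
      extFun m (jfun m d i) (2*l) + extFun m (jfun m d i) (2*l+1)
        = ((d:ℤ) - 2) - (extFun m i (2*l) + extFun m i (2*l+1)) := by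
    intro l hlr
    have hl : l < m+1 := Finset.mem_range.mp hlr
    rw [extFun_mk m _ (2*l) (by omega), extFun_mk m _ (2*l+1) (by omega),
      extFun_mk m i (2*l) (by omega), extFun_mk m i (2*l+1) (by omega),
      jfun_even m d i _ (even_two_mul l), jfun_odd m d i l hl]
    ring
  rw [Finset.sum_congr rfl this, Finset.sum_sub_distrib, Finset.sum_const, ← hsumi]
  simp only [Finset.card_range, nsmul_eq_mul]
  push_cast
  ring

/-- `φ(j)` lands in `I_N`. -/
lemma phi_mem_Iset (m d : ℕ) (hd : 3 ≤ d) (j : Fin (2*m+2) → ℤ) (hj : j ∈ Bset m d) :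
    phiMap m d j ∈ Iset m d ((m : ℤ) * d - 2*m - 2) := by
  have hbd : ∀ e, 0 ≤ phiMap m d j e ∧ phiMap m d j e ≤ (d:ℤ) - 2 := by
    intro e
    by_cases he : Even (e:ℕ)
    · rw [phi_even m d j e he]; constructor <;> [rfl; omega]
    · rw [phi_odd m d j e he]
      have := hj.1.1 e
      constructor <;> linarith [this.1, this.2]
  refine ⟨hbd, ?_⟩
  have hsum := fin_sum_pairs m (phiMap m d j)
  have hsumj := fin_sum_pairs m j
  rw [hj.1.2] at hsumj
  rw [hsum]
  have : ∀ l ∈ Finset.range (m+1),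
      extFun m (phiMap m d j) (2*l) + extFun m (phiMap m d j) (2*l+1)
        = ((d:ℤ) - 2) - (extFun m j (2*l) + extFun m j (2*l+1)) := by
    intro l hlr
    have hl : l < m+1 := Finset.mem_range.mp hlr
    rw [extFun_mk m _ (2*l) (by omega), extFun_mk m _ (2*l+1) (by omega),
      extFun_mk m j (2*l) (by omega), extFun_mk m j (2*l+1) (by omega),
      phi_even m d j _ (even_two_mul l), phi_odd m d j _ (by simp [Nat.even_iff]),
      hj.2 ⟨2*l, by omega⟩ (even_two_mul l)]
    ring
  rw [Finset.sum_congr rfl this, Finset.sum_sub_distrib, Finset.sum_const, ← hsumj]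
  simp only [Finset.card_range, nsmul_eq_mul]
  push_cast
  ring

/-- Row vanishing. -/
lemma row_vanish (m d : ℕ)
    (p : (Fin (2*m+2) → ℤ) → ℂ)
    (hp2 : ∀ i ∉ Icheck m d, p i = 0)
    (row : (Fin (2*m+2) → ℤ) → (↥(Iset m d (d : ℤ)) → ℂ))
    (hrow : ∀ i h, row i h = p (i + h.1))
    (i : Fin (2*m+2) → ℤ)
    (l0 : ℕ) (hl0 : l0 < m+1)
    (hbig : (d:ℤ) - 2 < i ⟨2*l0, by omega⟩ + i ⟨2*l0+1, by omega⟩) :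
    row i = 0 := by
  funext h
  rw [hrow, Pi.zero_apply]
  apply hp2
  rintro ⟨hbd, hps⟩
  have hp := hps l0 hl0
  have hh1 := (h.2.1 ⟨2*l0, by omega⟩).1
  have hh2 := (h.2.1 ⟨2*l0+1, by omega⟩).1
  simp only [Pi.add_apply] at hp
  linarith

/-- Row proportionality. -/
lemma row_prop (m d : ℕ) (hd : 3 ≤ d) (ζ : ℂ) (hζ : IsPrimitiveRoot ζ (2*d))
    (p : (Fin (2*m+2) → ℤ) → ℂ)
    (hp1 : ∀ i ∈ Icheck m d, p i = ζ ^ (evenSum m i))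
    (hp2 : ∀ i ∉ Icheck m d, p i = 0)
    (row : (Fin (2*m+2) → ℤ) → (↥(Iset m d (d : ℤ)) → ℂ))
    (hrow : ∀ i h, row i h = p (i + h.1))
    (i : Fin (2*m+2) → ℤ)
    (hi : i ∈ Iset m d ((m : ℤ) * d - 2*m - 2))
    (hips : ∀ l : ℕ, (hl : l < m+1) → i ⟨2*l, by omega⟩ + i ⟨2*l+1, by omega⟩ ≤ (d:ℤ) - 2) :
    row i = ζ ^ (evenSum m i) • row (phiMap m d (jfun m d i)) := by
  have hζ0 : ζ ≠ 0 := hζ.ne_zero (by omega)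
  have hjB := jfun_mem_Bset m d hd i hi hips
  funext h
  rw [hrow, Pi.smul_apply, smul_eq_mul, hrow]
  by_cases hmem : i + h.1 ∈ Icheck m d
  · have hmem' : phiMap m d (jfun m d i) + h.1 ∈ Icheck m d := by
      rw [mem_phi_Icheck_iff m d hd _ h.1 hjB h.2]
      intro l hl
      rw [jfun_odd m d i l hl]
      have := (mem_Icheck_iff m d i h.1 (fun e => (hi.1 e).1) hips h.2).mp hmem l hl
      linarith
    rw [hp1 _ hmem, hp1 _ hmem', evenSum_add, evenSum_add, evenSum_phi,
      zpow_add₀ hζ0, zero_add]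
  · have hmem' : phiMap m d (jfun m d i) + h.1 ∉ Icheck m d := by
      intro hc
      apply hmem
      rw [mem_Icheck_iff m d i h.1 (fun e => (hi.1 e).1) hips h.2]
      intro l hl
      have := (mem_phi_Icheck_iff m d hd _ h.1 hjB h.2).mp hc l hl
      rw [jfun_odd m d i l hl] at this
      linarith
    rw [hp2 _ hmem, hp2 _ hmem', mul_zero]


/-- The rows `M_{φ(j),•}`, `j ∈ B`, of the period matrix are linearly independent and span
its row space. -/
theorem stmt_11 (m d : ℕ) (hd : 3 ≤ d) (ζ : ℂ) (hζ : IsPrimitiveRoot ζ (2*d))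
    (p : (Fin (2*m+2) → ℤ) → ℂ)
    (hp1 : ∀ i ∈ Icheck m d, p i = ζ ^ (evenSum m i))
    (hp2 : ∀ i ∉ Icheck m d, p i = 0)
    (row : (Fin (2*m+2) → ℤ) → (↥(Iset m d (d : ℤ)) → ℂ))
    (hrow : ∀ i h, row i h = p (i + h.1)) :
    LinearIndependent ℂ (fun j : ↥(Bset m d) => row (phiMap m d j.1)) ∧
    Submodule.span ℂ ((fun j => row (phiMap m d j)) '' Bset m d) =
      Submodule.span ℂ (row '' Iset m d ((m : ℤ) * d - 2*m - 2)) := by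
  constructor
  · rw [linearIndependent_iff']
    intro s g hsum j hjs
    have hjI : j.1 ∈ Iset m d (d : ℤ) := j.2.1
    have hz := congrFun hsum ⟨j.1, hjI⟩
    simp only [Finset.sum_apply, Pi.smul_apply, smul_eq_mul, Pi.zero_apply] at hz
    have heach : ∀ j' ∈ s, g j' * row (phiMap m d j'.1) ⟨j.1, hjI⟩
        = if j' = j then g j' else 0 := by
      intro j' _
      rw [hrow, delta_lemma m d hd ζ p hp1 hp2 j'.1 j.1 j'.2 j.2]
      by_cases hc : j' = j
      · rw [if_pos hc, if_pos (by rw [hc]), mul_one]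
      · rw [if_neg hc, if_neg (fun hc2 => hc (Subtype.ext hc2).symm), mul_zero]
  
    rw [Finset.sum_congr rfl heach, Finset.sum_ite_eq' s j g, if_pos hjs] at hz
    exact hz
  · apply le_antisymm
    · apply Submodule.span_mono
      rintro x ⟨j, hj, rfl⟩
      exact ⟨phiMap m d j, phi_mem_Iset m d hd j hj, rfl⟩
    · rw [Submodule.span_le]
      rintro x ⟨i, hi, rfl⟩
      by_cases hc : ∀ l : ℕ, (hl : l < m+1) →
          i ⟨2*l, by omega⟩ + i ⟨2*l+1, by omega⟩ ≤ (d:ℤ) - 2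
      · rw [row_prop m d hd ζ hζ p hp1 hp2 row hrow i hi hc]
        exact Submodule.smul_mem _ _ (Submodule.subset_span
          ⟨jfun m d i, jfun_mem_Bset m d hd i hi hc, rfl⟩)
      · push_neg at hc
        obtain ⟨l0, hl0, hbig⟩ := hc
        rw [row_vanish m d p hp2 row hrow i l0 hl0 hbig]
        exact Submodule.zero_mem _
end

section
/- Let n be even, d ≥ 3, m ≥ 1, and let ζ be a primitive 2d-th root of unity. Define two period vectors over the index set Ǐ := { i ∈ Z^{n+2} : 0 ≤ i_e ≤ d-2, i_{2l-2}+i_{2l-1} = d-2 ∀ l = 1,...,n/2+1 }: q_i := ζ^{i_0+i_2+⋯+i_n} and q'_i := ζ^{Σ_{e=0}^{m}(i_{2e}+1) + 3·Σ_{e=m+1}^{n/2}(i_{2e}+1)} (extended by zero outside Ǐ). If m ≤ n/2 - 1 and d ≥ 3, then q and q' are not proportional, i.e., there is no constant c ∈ C with q'_i = c · q_i for all i. -/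
/-- The period vectors `q` (of the linear cycle `P^{n/2}` with `a = 0`) and `q'` (of the
linear cycle with `a = (0,…,0,1,…,1)`, `mp+1` zeros) over `Ǐ` are not proportional, for
`1 ≤ mp ≤ n/2 - 1` and `d ≥ 3`. -/
theorem stmt_17 (m d mp : ℕ) (hd : 3 ≤ d) (hmp1 : 1 ≤ mp) (hmp2 : mp + 1 ≤ m)
    (ζ : ℂ) (hζ : IsPrimitiveRoot ζ (2*d))
    (q q' : (Fin (2*m+2) → ℤ) → ℂ)
    (hq1 : ∀ i ∈ Icheck m d, q i = ζ ^ (evenSum m i))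
    (hq2 : ∀ i ∉ Icheck m d, q i = 0)
    (hq'1 : ∀ i ∈ Icheck m d, q' i = ζ ^
      ((∑ e ∈ Finset.univ.filter (fun e : Fin (m+1) => e.1 ≤ mp),
          (i ⟨2*e.1, by have := e.isLt; omega⟩ + 1)) +
       3 * ∑ e ∈ Finset.univ.filter (fun e : Fin (m+1) => mp + 1 ≤ e.1),
          (i ⟨2*e.1, by have := e.isLt; omega⟩ + 1)))
    (hq'2 : ∀ i ∉ Icheck m d, q' i = 0) :
    ¬ ∃ c : ℂ, ∀ i, q' i = c * q i := by
  rintro ⟨c, hc⟩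
  have hd' : (3:ℤ) ≤ (d:ℤ) := by exact_mod_cast hd
  have hζne : ζ ≠ 0 := hζ.ne_zero (by omega)
  -- the two index vectors
  set i0 : Fin (2*m+2) → ℤ := fun e => if Even e.1 then 0 else (d:ℤ)-2 with hi0
  set i1 : Fin (2*m+2) → ℤ := fun e =>
    if e.1 = 2*m then 1 else if e.1 = 2*m+1 then (d:ℤ)-3
    else if Even e.1 then 0 else (d:ℤ)-2 with hi1
  have hI0 : i0 ∈ Icheck m d := by
    constructor
    · intro e; simp only [hi0]; split <;> omega
    · intro l hl
      have hev : Even (2*l) := even_two_mul l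
      have hodd : ¬ Even (2*l+1) := by simp [Nat.even_add_one, hev]
      simp only [hi0]
      rw [if_pos hev, if_neg hodd]
      ring
  have hI1 : i1 ∈ Icheck m d := by
    constructor
    · intro e; simp only [hi1]
      split
      · omega
      · split
        · omega
        · split <;> omega
    · intro l hl
      have hev : Even (2*l) := even_two_mul l
      have hodd : ¬ Even (2*l+1) := by simp [Nat.even_add_one, hev]
      simp only [hi1]
      rw [if_pos hev, if_neg hodd]
      split_ifs <;> omega
  -- evenSum computations
  have hes0 : evenSum m i0 = 0 := by
    apply Finset.sum_eq_zero
    intro e he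
    simp only [Finset.mem_filter] at he
    simp [hi0, he.2]
  set a : Fin (2*m+2) := ⟨2*m, by omega⟩ with ha
  have hes1 : evenSum m i1 = 1 := by
    unfold evenSum
    rw [Finset.sum_eq_single_of_mem a]
    · simp [hi1, ha]
    · simp [ha, Nat.even_iff, Nat.mul_mod]
    · intro b hb hba
      simp only [Finset.mem_filter] at hb
      have hb1 : b.1 ≠ 2*m := by
        intro h; apply hba; apply Fin.ext; simpa [ha] using h
      have hb2 : b.1 ≠ 2*m+1 := by
        have := hb.2
        rw [Nat.even_iff] at this
        omega
      simp [hi1, hb1, hb2, hb.2]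
  -- the exponents of q'
  set S1 := Finset.univ.filter (fun e : Fin (m+1) => e.1 ≤ mp) with hS1
  set S2 := Finset.univ.filter (fun e : Fin (m+1) => mp + 1 ≤ e.1) with hS2
  have hpf : ∀ e : Fin (m+1), 2*e.1 < 2*m+2 := by intro e; have := e.isLt; omega
  set A0 := ∑ e ∈ S1, (i0 ⟨2*e.1, hpf e⟩ + 1) with hA0
  set B0 := ∑ e ∈ S2, (i0 ⟨2*e.1, hpf e⟩ + 1) with hB0
  set A1 := ∑ e ∈ S1, (i1 ⟨2*e.1, hpf e⟩ + 1) with hA1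
  set B1 := ∑ e ∈ S2, (i1 ⟨2*e.1, hpf e⟩ + 1) with hB1
  have e0 : ζ ^ (A0 + 3 * B0) = c * ζ ^ (0:ℤ) := by
    have := hc i0
    rw [hq1 i0 hI0, hq'1 i0 hI0, hes0] at this
    exact this
  have e1 : ζ ^ (A1 + 3 * B1) = c * ζ ^ (1:ℤ) := by
    have := hc i1
    rw [hq1 i1 hI1, hq'1 i1 hI1, hes1] at this
    exact this
  -- compare the exponents
  have hfirst : A1 = A0 := by
    apply Finset.sum_congr rfl
    intro e he
    simp only [hS1, Finset.mem_filter] at he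
    have h1 : 2*e.1 ≠ 2*m := by omega
    have h2 : 2*e.1 ≠ 2*m+1 := by omega
    simp [hi1, hi0, h1, h2]
  set em : Fin (m+1) := ⟨m, by omega⟩ with hem
  have hemS2 : em ∈ S2 := by simp [hS2, hem, hmp2]; omega
  have herase : ∀ e ∈ S2.erase em,
      (i1 ⟨2*e.1, hpf e⟩ + 1) = (i0 ⟨2*e.1, hpf e⟩ + 1) := by
    intro e he
    have hne : e ≠ em := (Finset.mem_erase.mp he).1
    have hlt : e.1 < m := by
      have h1 := e.isLt
      have : e.1 ≠ m := fun h => hne (Fin.ext (by simpa [hem] using h))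
      omega
    have h1 : 2*e.1 ≠ 2*m := by omega
    have h2 : 2*e.1 ≠ 2*m+1 := by omega
    simp [hi1, hi0, h1, h2]
  have hsecond : B1 = B0 + 1 := by
    rw [hB1, hB0, ← Finset.add_sum_erase _ (fun e : Fin (m+1) => (i1 ⟨2*e.1, hpf e⟩ + 1)) hemS2,
      ← Finset.add_sum_erase _ (fun e : Fin (m+1) => (i0 ⟨2*e.1, hpf e⟩ + 1)) hemS2,
      Finset.sum_congr rfl herase]
    have hv1 : i1 ⟨2*em.1, hpf em⟩ = 1 := by simp [hi1, hem]
    have hv0 : i0 ⟨2*em.1, hpf em⟩ = 0 := by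
      simp [hi0, hem, Nat.even_iff, Nat.mul_mod]
    rw [hv1, hv0]
    ring
  have hexp : A1 + 3 * B1 = (A0 + 3 * B0) + 3 := by rw [hfirst, hsecond]; ring
  rw [hexp, zpow_add₀ hζne] at e1
  rw [zpow_zero, mul_one] at e0
  rw [← e0] at e1
  have hzE : ζ ^ (A0 + 3 * B0) ≠ 0 := zpow_ne_zero _ hζne
  have h3 : ζ ^ (3:ℤ) = ζ ^ (1:ℤ) := mul_left_cancel₀ hzE e1
  rw [zpow_one] at h3
  have h3' : ζ ^ (3:ℕ) = ζ := by exact_mod_cast h3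
  have h2 : ζ ^ 2 = 1 := by
    have hm : ζ * ζ ^ 2 = ζ * 1 := by rw [mul_one]; linear_combination h3' 
    exact mul_left_cancel₀ hζne hm
  have := Nat.le_of_dvd (by norm_num) ((hζ.pow_eq_one_iff_dvd 2).mp h2)
  omega
end
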